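/- Let β > 2 be irrational and let α satisfy 1/α + 1/β = 1. For all nonnegative integers m ≠ n, the sets {⌊αm⌋, ⌊βm⌋} and {⌊αn⌋, ⌊βn⌋} are disjoint; consequently, no position (⌊αm⌋, ⌊βm⌋) can be obtained from (⌊αn⌋, ⌊βn⌋) with m ≠ n by strictly decreasing exactly one coordinate (in either order of the coordinates). -/

import Mathlib

open scoped symmDiff

/-- A Nim move on two heaps: strictly decrease exactly one coordinate. -/
def Move (p q : ℕ × ℕ) : Prop :=
  (q.1 < p.1 ∧ q.2 = p.2) ∨ (q.1 = p.1 ∧ q.2 < p.2)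

private lemma floor_ne_same {r : ℝ} (hr : 1 < r) {m n : ℕ} (hmn : m ≠ n) :
    ⌊r * m⌋ ≠ ⌊r * n⌋ := by
  wlog h : m < n generalizing m n
  · exact (this hmn.symm (by omega)).symm
  have hmn' : (m:ℝ) + 1 ≤ n := by exact_mod_cast Nat.succ_le.mpr h
  have : ⌊r * m⌋ + 1 ≤ ⌊r * n⌋ :=
    Int.le_floor.mpr (by push_cast; nlinarith [Int.floor_le (r * (m:ℝ))])
  omega

private lemma alpha_gt_one {β α : ℝ} (hβ : 2 < β) (hα : 1 / α + 1 / β = 1) : 1 < α := by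
  have hβinv2 : 1 / β < 1 / 2 := by
    rw [div_lt_div_iff₀ (by linarith) (by norm_num)]; linarith
  have hαinvpos : 0 < 1 / α := by linarith
  have hαpos : 0 < α := one_div_pos.mp hαinvpos
  have hmul : (1 / α) * α = 1 := one_div_mul_cancel (ne_of_gt hαpos)
  have hβinvpos : (0:ℝ) < 1 / β := by positivity
  nlinarith

private lemma floor_mix {β : ℝ} (hβ : 2 < β) (hirr : Irrational β)
    {α : ℝ} (hα : 1 / α + 1 / β = 1) (m n : ℕ) (hmn : m ≠ n) :
    ⌊α * m⌋ ≠ ⌊β * n⌋ := by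
  have hβ1 : (1:ℝ) < β := by linarith
  have hα1 : 1 < α := alpha_gt_one hβ hα
  have hconj : β.HolderConjugate α := Real.holderConjugate_iff.mpr ⟨hβ1, by rw [← one_div, ← one_div]; linarith⟩
  rcases Nat.eq_zero_or_pos m with hm | hm
  · subst hm
    have hn : 0 < n := Nat.pos_of_ne_zero (fun h => hmn (h ▸ rfl))
    simp only [Nat.cast_zero, mul_zero, Int.floor_zero]
    have h1 : (1:ℝ) ≤ n := by exact_mod_cast hn
    have : (1:ℤ) ≤ ⌊β * n⌋ := Int.le_floor.mpr (by push_cast; nlinarith)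
    omega
  rcases Nat.eq_zero_or_pos n with hn | hn
  · subst hn
    simp only [Nat.cast_zero, mul_zero, Int.floor_zero]
    have h1 : (1:ℝ) ≤ m := by exact_mod_cast hm
    have : (1:ℤ) ≤ ⌊α * m⌋ := Int.le_floor.mpr (by push_cast; nlinarith)
    omega
  intro h
  have hsd := hirr.beattySeq_symmDiff_beattySeq_pos hconj
  set j := ⌊β * n⌋ with hj
  have hjA : j ∈ {x | ∃ k > 0, beattySeq α k = x} :=
    ⟨(m:ℤ), by exact_mod_cast hm, by rw [beattySeq, mul_comm]; push_cast; exact h⟩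
  have hjB : j ∈ {x | ∃ k > 0, beattySeq β k = x} :=
    ⟨(n:ℤ), by exact_mod_cast hn, by rw [beattySeq, mul_comm]; push_cast; rfl⟩
  have hjpos : 0 < j := by
    have h1 : (1:ℝ) ≤ n := by exact_mod_cast hn
    exact Int.le_floor.mpr (by push_cast; nlinarith)
  have : j ∈ {x : ℤ | ∃ k > 0, beattySeq β k = x} ∆ {x | ∃ k > 0, beattySeq α k = x} := by
    rw [hsd]; exact hjpos
  rw [Set.mem_symmDiff] at this
  tauto

theorem stmt6 (β : ℝ) (hβ : 2 < β) (hirr : Irrational β)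
    (α : ℝ) (hα : 1 / α + 1 / β = 1)
    (m n : ℕ) (hmn : m ≠ n) :
    (⌊α * m⌋ ≠ ⌊α * n⌋ ∧ ⌊α * m⌋ ≠ ⌊β * n⌋ ∧
     ⌊β * m⌋ ≠ ⌊α * n⌋ ∧ ⌊β * m⌋ ≠ ⌊β * n⌋) ∧
    (∀ q : ℕ × ℕ, Move ((⌊α * n⌋).toNat, (⌊β * n⌋).toNat) q →
      q ≠ ((⌊α * m⌋).toNat, (⌊β * m⌋).toNat) ∧
      q ≠ ((⌊β * m⌋).toNat, (⌊α * m⌋).toNat)) := by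
  have hβ1 : (1:ℝ) < β := by linarith
  have hα1 : 1 < α := alpha_gt_one hβ hα
  have h1 : ⌊α * m⌋ ≠ ⌊α * n⌋ := floor_ne_same hα1 hmn
  have h2 : ⌊α * m⌋ ≠ ⌊β * n⌋ := floor_mix hβ hirr hα m n hmn
  have h3 : ⌊β * m⌋ ≠ ⌊α * n⌋ := (floor_mix hβ hirr hα n m hmn.symm).symm
  have h4 : ⌊β * m⌋ ≠ ⌊β * n⌋ := floor_ne_same hβ1 hmn
  refine ⟨⟨h1, h2, h3, h4⟩, ?_⟩
  have nn : ∀ (r : ℝ) (k : ℕ), 1 < r → (0:ℤ) ≤ ⌊r * k⌋ := fun r k hr =>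
    Int.floor_nonneg.mpr (by positivity)
  have tn : ∀ a b : ℤ, 0 ≤ a → 0 ≤ b → a.toNat = b.toNat → a = b := by
    intro a b ha hb h; omega
  intro q hq
  constructor
  · intro heq
    subst heq
    rcases hq with ⟨_, h⟩ | ⟨h, _⟩
    · exact h4 (tn _ _ (nn β m hβ1) (nn β n hβ1) h)
    · exact h1 (tn _ _ (nn α m hα1) (nn α n hα1) h)
  · intro heq
    subst heq
    rcases hq with ⟨_, h⟩ | ⟨h, _⟩
    · exact h2 (tn _ _ (nn α m hα1) (nn β n hβ1) h)
    · exact h3 (tn _ _ (nn β m hβ1) (nn α n hα1) h)
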